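/- arXiv:2509.05501 — 5 statements merged into one kernel-verified Lean document; each statement's English description precedes it below -/
import Mathlib

section
/- The set of rational numbers of the form (4a + 2b)/(5a + 2b), where a ranges over positive integers and b over nonnegative integers, is exactly the set of rationals in the interval [4/5, 1). -/
theorem stmt_2 :
    {x : ℚ | ∃ a b : ℕ, 0 < a ∧ x = ((4 * a + 2 * b : ℕ) : ℚ) / ((5 * a + 2 * b : ℕ) : ℚ)} =
      {x : ℚ | 4 / 5 ≤ x ∧ x < 1} := by
  ext x
  simp only [Set.mem_setOf_eq]
  constructor
  · rintro ⟨a, b, ha, rfl⟩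
    have hA : (0:ℚ) < (4 * a + 2 * b : ℕ) := by positivity
    have hB : (0:ℚ) < (5 * a + 2 * b : ℕ) := by
      have : 0 < 5 * a + 2 * b := by omega
      exact_mod_cast this
    push_cast
    constructor
    · rw [div_le_div_iff₀ (by norm_num) (by exact_mod_cast hB)]
      push_cast
      nlinarith [(Nat.cast_pos.mpr ha : (0:ℚ) < a), (Nat.cast_nonneg b : (0:ℚ) ≤ b)]
    · rw [div_lt_one (by exact_mod_cast hB)]
      push_cast
      nlinarith [(Nat.cast_pos.mpr ha : (0:ℚ) < a)]
  · rintro ⟨h1, h2⟩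
    have hx0 : 0 < x := lt_of_lt_of_le (by norm_num) h1
    have hnum : 0 < x.num := Rat.num_pos.mpr hx0
    set n : ℕ := x.num.toNat with hn
    set d : ℕ := x.den with hd
    have hdpos : 0 < d := x.pos
    have hxeq : x = (n : ℚ) / (d : ℚ) := by
      have hnq : (n : ℚ) = (x.num : ℚ) := by
        rw [hn]; exact_mod_cast Int.toNat_of_nonneg hnum.le
      rw [hnq, hd]; exact (Rat.num_div_den x).symm
    have hdQ : (0:ℚ) < (d:ℚ) := by exact_mod_cast hdpos
    have hlt : n < d := by
      have := h2
      rw [hxeq, div_lt_one hdQ] at this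
      exact_mod_cast this
    have hle : 4 * d ≤ 5 * n := by
      have := h1
      rw [hxeq, div_le_div_iff₀ (by norm_num) hdQ] at this
      have : 4 * d ≤ n * 5 := by exact_mod_cast this
      omega
    refine ⟨2 * (d - n), 5 * n - 4 * d, by omega, ?_⟩
    have e1 : 4 * (2 * (d - n)) + 2 * (5 * n - 4 * d) = 2 * n := by omega
    have e2 : 5 * (2 * (d - n)) + 2 * (5 * n - 4 * d) = 2 * d := by omega
    rw [e1, e2, hxeq]
    push_cast
    rw [mul_div_mul_left _ _ (by norm_num : (2:ℚ) ≠ 0)]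
end

section
/- The set of rational numbers of the form (9a + 4b)/(10a + 4b), where a ranges over positive integers and b over nonnegative integers, is exactly the set of rationals in the interval [9/10, 1). -/
theorem stmt_3 :
    {x : ℚ | ∃ a b : ℕ, 0 < a ∧ x = ((9 * a + 4 * b : ℕ) : ℚ) / ((10 * a + 4 * b : ℕ) : ℚ)} =
      {x : ℚ | 9 / 10 ≤ x ∧ x < 1} := by
  ext x
  simp only [Set.mem_setOf_eq]
  constructor
  · rintro ⟨a, b, ha, rfl⟩
    have hd : 0 < 10 * a + 4 * b := by omega
    have hden : (0 : ℚ) < ((10 * a + 4 * b : ℕ) : ℚ) := by exact_mod_cast hd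
    have ha' : (1 : ℚ) ≤ (a : ℚ) := by exact_mod_cast ha
    constructor
    · rw [div_le_div_iff₀ (by norm_num) hden]
      push_cast
      nlinarith
    · rw [div_lt_one hden]
      push_cast
      linarith
  · rintro ⟨h1, h2⟩
    have hnum : 0 < x.num := by
      have : (0 : ℚ) < x := lt_of_lt_of_le (by norm_num) h1
      exact Rat.num_pos.mpr this
    set p := x.num.toNat with hp
    set q := x.den with hq
    have hpx : ((p : ℤ) : ℚ) = (x.num : ℚ) := by
      exact_mod_cast congrArg (Int.cast : ℤ → ℚ) (Int.toNat_of_nonneg hnum.le)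
    have hxeq : x = (p : ℚ) / (q : ℚ) := by
      rw [show ((p : ℚ)) = ((x.num : ℚ)) by exact_mod_cast hpx, Rat.num_div_den]
    have hqpos : 0 < q := x.pos
    have hqQ : (0 : ℚ) < (q : ℚ) := by exact_mod_cast hqpos
    rw [hxeq] at h1 h2
    rw [div_le_div_iff₀ (by norm_num) hqQ] at h1
    rw [div_lt_one hqQ] at h2
    have h1' : 9 * q ≤ 10 * p := by exact_mod_cast h1.trans_eq (mul_comm _ _)
    have h2' : p < q := by exact_mod_cast h2
    refine ⟨4 * (q - p), 10 * p - 9 * q, by omega, ?_⟩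
    have e1 : 9 * (4 * (q - p)) + 4 * (10 * p - 9 * q) = 4 * p := by omega
    have e2 : 10 * (4 * (q - p)) + 4 * (10 * p - 9 * q) = 4 * q := by omega
    rw [e1, e2, hxeq]
    push_cast
    rw [mul_div_mul_left _ _ (by norm_num : (4:ℚ) ≠ 0)]
end

section
/- Let G be a cubic graph and M_1, M_2, M_3 perfect matchings. With S_i the set of edges covered by exactly i matchings: both S_0 and S_2 are matchings of G whenever S_3 is empty, and the subgraph induced by S_0 ∪ S_2 has every vertex of degree 0 or 2. -/
open scoped Classical

/-- A set of edges is a matching if no two distinct edges share a vertex. -/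
def EdgeSetMatching {V : Type*} (M : Set (Sym2 V)) : Prop :=
  ∀ e ∈ M, ∀ f ∈ M, e ≠ f → ∀ v : V, v ∈ e → v ∉ f

/-- A perfect matching of a graph, as a set of edges: each vertex is
incident with exactly one edge of the set. -/
def IsPerfectMatchingSet {V : Type*} (G : SimpleGraph V) (M : Set (Sym2 V)) : Prop :=
  M ⊆ G.edgeSet ∧ ∀ v : V, ∃! e, e ∈ M ∧ v ∈ e

/-- The number of the three matchings containing a given edge. -/
noncomputable def coverCount {V : Type*} (M : Fin 3 → Set (Sym2 V)) (e : Sym2 V) : ℕ :=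
  {i : Fin 3 | e ∈ M i}.ncard

private lemma coverCount_eq {V : Type*} (M : Fin 3 → Set (Sym2 V)) (e : Sym2 V) :
    coverCount M e = (Finset.univ.filter fun i => e ∈ M i).card := by
  rw [coverCount, ← Set.ncard_coe_finset]
  congr 1
  ext i; simp

private lemma coverCount_le_three {V : Type*} (M : Fin 3 → Set (Sym2 V)) (e : Sym2 V) :
    coverCount M e ≤ 3 := by
  rw [coverCount_eq]
  calc (Finset.univ.filter fun i => e ∈ M i).card ≤ (Finset.univ : Finset (Fin 3)).card :=
        Finset.card_filter_le _ _
    _ = 3 := by simp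

theorem stmt_10 {V : Type*} [Fintype V] (G : SimpleGraph V) [DecidableRel G.Adj]
    (hcubic : ∀ v : V, G.degree v = 3)
    (M : Fin 3 → Set (Sym2 V)) (hM : ∀ i, IsPerfectMatchingSet G (M i))
    (hS3 : ∀ e ∈ G.edgeSet, coverCount M e ≠ 3) :
    EdgeSetMatching {e ∈ G.edgeSet | coverCount M e = 0} ∧
    EdgeSetMatching {e ∈ G.edgeSet | coverCount M e = 2} ∧
    (∀ v : V, {e ∈ G.edgeSet | v ∈ e ∧ (coverCount M e = 0 ∨ coverCount M e = 2)}.ncard = 0 ∨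
      {e ∈ G.edgeSet | v ∈ e ∧ (coverCount M e = 0 ∨ coverCount M e = 2)}.ncard = 2) := by
  classical
  set I : V → Finset (Sym2 V) := fun v => G.incidenceFinset v with hI
  have hmemI : ∀ (v : V) (e : Sym2 V), e ∈ I v ↔ e ∈ G.edgeSet ∧ v ∈ e := by
    intro v e
    simp [hI, SimpleGraph.mem_incidenceFinset, SimpleGraph.incidenceSet]
  have hcardI : ∀ v, (I v).card = 3 := by
    intro v
    rw [hI]
    rw [SimpleGraph.card_incidenceFinset_eq_degree]
    exact hcubic v
  have hle : ∀ e ∈ G.edgeSet, coverCount M e ≤ 2 := by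
    intro e he
    have h1 := coverCount_le_three M e
    have h2 := hS3 e he
    omega
  -- total cover at each vertex is 3
  have hsum : ∀ v : V, ∑ e ∈ I v, coverCount M e = 3 := by
    intro v
    have h1 : ∀ i : Fin 3, ((I v).filter (fun e => e ∈ M i)).card = 1 := by
      intro i
      obtain ⟨e₀, ⟨he₀M, he₀v⟩, huniq⟩ := (hM i).2 v
      rw [Finset.card_eq_one]
      refine ⟨e₀, ?_⟩
      ext f
      simp only [Finset.mem_filter, Finset.mem_singleton, hmemI]
      constructor
      · rintro ⟨⟨_, hvf⟩, hfM⟩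
        exact huniq f ⟨hfM, hvf⟩
      · rintro rfl
        exact ⟨⟨(hM i).1 he₀M, he₀v⟩, he₀M⟩
    calc ∑ e ∈ I v, coverCount M e
        = ∑ e ∈ I v, ∑ i : Fin 3, (if e ∈ M i then 1 else 0) := by
          refine Finset.sum_congr rfl fun e _ => ?_
          rw [coverCount_eq, Finset.card_filter]
      _ = ∑ i : Fin 3, ∑ e ∈ I v, (if e ∈ M i then 1 else 0) := Finset.sum_comm
      _ = ∑ i : Fin 3, 1 := by
          refine Finset.sum_congr rfl fun i _ => ?_
          rw [← Finset.card_filter]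
          exact h1 i
      _ = 3 := by simp
  refine ⟨?_, ?_, ?_⟩
  · -- S₀ is a matching
    rintro e ⟨heE, he0⟩ f ⟨hfE, hf0⟩ hne v hve hvf
    have heI : e ∈ I v := (hmemI v e).2 ⟨heE, hve⟩
    have hfI : f ∈ I v := (hmemI v f).2 ⟨hfE, hvf⟩
    have hsub : ({e, f} : Finset (Sym2 V)) ⊆ I v := by
      intro x hx
      rcases Finset.mem_insert.1 hx with rfl | hx
      · exact heI
      · rw [Finset.mem_singleton.1 hx]; exact hfI
    have hdiff : ∑ x ∈ I v \ {e, f}, coverCount M x + ∑ x ∈ ({e, f} : Finset (Sym2 V)), coverCount M x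
        = ∑ x ∈ I v, coverCount M x := Finset.sum_sdiff hsub
    have hpair : ∑ x ∈ ({e, f} : Finset (Sym2 V)), coverCount M x = 0 := by
      rw [Finset.sum_pair hne, he0, hf0]
    have hcard : (I v \ {e, f}).card = 1 := by
      rw [Finset.card_sdiff_of_subset hsub, hcardI, Finset.card_pair hne]
    obtain ⟨g, hg⟩ := Finset.card_eq_one.1 hcard
    have hgI : g ∈ I v := by
      have : g ∈ I v \ {e, f} := by rw [hg]; simp
      exact (Finset.mem_sdiff.1 this).1
    have hgle : coverCount M g ≤ 2 := hle g ((hmemI v g).1 hgI).1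
    rw [hsum v, hpair, hg, Finset.sum_singleton] at hdiff
    omega
  · -- S₂ is a matching
    rintro e ⟨heE, he2⟩ f ⟨hfE, hf2⟩ hne v hve hvf
    have heI : e ∈ I v := (hmemI v e).2 ⟨heE, hve⟩
    have hfI : f ∈ I v := (hmemI v f).2 ⟨hfE, hvf⟩
    have hsub : ({e, f} : Finset (Sym2 V)) ⊆ I v := by
      intro x hx
      rcases Finset.mem_insert.1 hx with rfl | hx
      · exact heI
      · rw [Finset.mem_singleton.1 hx]; exact hfI
    have hmono : ∑ x ∈ ({e, f} : Finset (Sym2 V)), coverCount M x ≤ ∑ x ∈ I v, coverCount M x :=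
      Finset.sum_le_sum_of_subset hsub
    rw [Finset.sum_pair hne, he2, hf2, hsum v] at hmono
    omega
  · -- each vertex has 0 or 2 incident edges in S₀ ∪ S₂
    intro v
    set P : Sym2 V → Prop := fun e => coverCount M e = 0 ∨ coverCount M e = 2 with hP
    have hset : {e ∈ G.edgeSet | v ∈ e ∧ P e} = ↑((I v).filter P) := by
      ext e
      simp only [Set.mem_setOf_eq, Finset.coe_filter, hmemI]
      tauto
    rw [hset, Set.ncard_coe_finset]
    obtain ⟨a, b, c, hab, hac, hbc, habc⟩ := Finset.card_eq_three.1 (hcardI v)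
    have haE : a ∈ G.edgeSet := ((hmemI v a).1 (by rw [habc]; simp)).1
    have hbE : b ∈ G.edgeSet := ((hmemI v b).1 (by rw [habc]; simp)).1
    have hcE : c ∈ G.edgeSet := ((hmemI v c).1 (by rw [habc]; simp)).1
    have hsum3 : coverCount M a + coverCount M b + coverCount M c = 3 := by
      have := hsum v
      rw [habc, Finset.sum_insert (by simp [hab, hac]),
        Finset.sum_insert (by simp [hbc]), Finset.sum_singleton] at this
      omega
    have hcardf : ((I v).filter P).card =
        (if P a then 1 else 0) + ((if P b then 1 else 0) + (if P c then 1 else 0)) := by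
      rw [Finset.card_filter, habc, Finset.sum_insert (by simp [hab, hac]),
        Finset.sum_insert (by simp [hbc]), Finset.sum_singleton]
    have hla := hle a haE
    have hlb := hle b hbE
    have hlc := hle c hcE
    rw [hcardf]
    simp only [hP]
    split_ifs <;> omega
end

section
/- In the Petersen graph, the union of any three perfect matchings covers at most 12 of the 15 edges; equivalently, at least 3 edges remain uncovered. Moreover, there exist three perfect matchings covering exactly 12 edges. -/
/-- The Petersen graph as the Kneser graph K(5,2): vertices are the 2-element
subsets of a 5-element set, adjacent when disjoint. -/
def petersen : SimpleGraph {s : Finset (Fin 5) // s.card = 2} where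
  Adj a b := Disjoint a.1 b.1
  symm := ⟨fun a b h => h.symm⟩
  loopless := ⟨fun a h => by
    have := h.eq_bot
    simp only [disjoint_self] at h
    have : a.1.card = 0 := by rw [h]; rfl
    omega⟩

abbrev PV := {s : Finset (Fin 5) // s.card = 2}

instance : DecidableRel petersen.Adj := fun a b => decidable_of_iff (Disjoint a.1 b.1) Iff.rfl

def pv2 (i j : Fin 5) (h : ({i,j} : Finset (Fin 5)).card = 2 := by decide) : PV := ⟨{i,j}, h⟩

def pE (a b c d : Fin 5)
    (h1 : ({a,b} : Finset (Fin 5)).card = 2 := by decide)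
    (h2 : ({c,d} : Finset (Fin 5)).card = 2 := by decide) : Sym2 PV :=
  s(pv2 a b h1, pv2 c d h2)

def edgeList : List (Sym2 PV) :=
  [pE 0 1 2 3, pE 0 1 2 4, pE 0 1 3 4, pE 0 2 1 3, pE 0 2 1 4, pE 0 2 3 4,
   pE 0 3 1 2, pE 0 3 1 4, pE 0 3 2 4, pE 0 4 1 2, pE 0 4 1 3, pE 0 4 2 3,
   pE 1 2 3 4, pE 1 3 2 4, pE 1 4 2 3]

def msF : Fin 6 → Finset (Sym2 PV)
| 0 => {pE 0 1 2 3, pE 0 2 1 4, pE 0 3 2 4, pE 0 4 1 3, pE 1 2 3 4}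
| 1 => {pE 0 1 2 3, pE 0 2 3 4, pE 0 3 1 4, pE 0 4 1 2, pE 1 3 2 4}
| 2 => {pE 0 1 2 4, pE 0 2 1 3, pE 0 3 1 4, pE 0 4 2 3, pE 1 2 3 4}
| 3 => {pE 0 1 2 4, pE 0 2 3 4, pE 0 3 1 2, pE 0 4 1 3, pE 1 4 2 3}
| 4 => {pE 0 1 3 4, pE 0 2 1 3, pE 0 3 2 4, pE 0 4 1 2, pE 1 4 2 3}
| 5 => {pE 0 1 3 4, pE 0 2 1 4, pE 0 3 1 2, pE 0 4 2 3, pE 1 3 2 4}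

def buildL {α : Type*} : List α → List Bool → List α
| _, [] => []
| [], _ => []
| a::as, b::bs => if b then a :: buildL as bs else buildL as bs

def cnt : List Bool → List Bool → Nat
| a::as, b::bs => (bif a && b then 1 else 0) + cnt as bs
| _, _ => 0

def ex1 (a b c : Bool) : Prop :=
  (bif a then 1 else 0) + (bif b then 1 else 0) + (bif c then (1:Nat) else 0) = 1

instance (a b c : Bool) : Decidable (ex1 a b c) := by unfold ex1; infer_instance

def sixMasks : List (List Bool) :=
 [[true, false, false, false, true, false, false, false, true, false, true, false, true, false, false],
  [true, false, false, false, false, true, false, true, false, true, false, false, false, true, false],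
  [false, true, false, true, false, false, false, true, false, false, false, true, true, false, false],
  [false, true, false, false, false, true, true, false, false, false, true, false, false, false, true],
  [false, false, true, true, false, false, false, false, true, true, false, false, false, false, true],
  [false, false, true, false, true, false, true, false, false, false, false, true, false, true, false]]

set_option maxHeartbeats 2000000 in
set_option synthInstance.maxHeartbeats 2000000 in
set_option synthInstance.maxSize 2000 in
theorem key_idx : ∀ b1 b2 b3 : Bool, ex1 b1 b2 b3 → ∀ b4 b5 b6, ex1 b4 b5 b6 →
    ∀ b7 b8 b9, ex1 b7 b8 b9 → ∀ b10 b11 b12, ex1 b10 b11 b12 →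
    ∀ b13, ex1 b7 b10 b13 → ex1 b3 b6 b13 →
    ∀ b14, ex1 b4 b11 b14 → ex1 b2 b9 b14 →
    ∀ b15, ex1 b5 b8 b15 → ex1 b1 b12 b15 →
    [b1,b2,b3,b4,b5,b6,b7,b8,b9,b10,b11,b12,b13,b14,b15] ∈ sixMasks := by
  decide

theorem filter_eq_buildL {α : Type*} (p : α → Bool) :
    ∀ L : List α, L.filter p = buildL L (L.map p) := by
  intro L
  induction L with
  | nil => rfl
  | cons a as ih => cases hpa : p a <;> simp [List.filter_cons, buildL, hpa, ih]

theorem countP_buildL {α : Type*} (p : α → Bool) :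
    ∀ (L : List α) (bs : List Bool), (buildL L bs).countP p = cnt (L.map p) bs := by
  intro L
  induction L with
  | nil => intro bs; cases bs <;> simp [buildL, cnt]
  | cons a as ih =>
    intro bs
    cases bs with
    | nil => simp [buildL, cnt]
    | cons b bs =>
      cases b <;> cases hpa : p a <;>
        simp [buildL, cnt, List.countP_cons, ih, hpa] <;> omega

theorem finset_eq_filter_toFinset {α : Type*} [DecidableEq α] (L : List α) (F : Finset α)
    (h : ∀ a ∈ F, a ∈ L) : F = (L.filter (fun a => decide (a ∈ F))).toFinset := by
  ext a
  simp only [List.mem_toFinset, List.mem_filter, decide_eq_true_eq]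
  exact ⟨fun ha => ⟨h a ha, ha⟩, fun h => h.2⟩

theorem edge_cover : ∀ e ∈ petersen.edgeFinset, e ∈ edgeList := by decide

theorem edgeList_nodup : edgeList.Nodup := by decide

set_option maxHeartbeats 2000000 in
theorem classify (F : Finset (Sym2 PV)) (hsub : F ⊆ petersen.edgeFinset)
    (hdeg : ∀ v : PV, (F.filter (fun e => v ∈ e)).card = 1) : ∃ i : Fin 6, F = msF i := by
  set q : Sym2 PV → Bool := fun e => decide (e ∈ F) with hq
  have hF : F = (edgeList.filter q).toFinset :=
    finset_eq_filter_toFinset edgeList F (fun a ha => edge_cover a (hsub ha))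
  have hbuild : edgeList.filter q = buildL edgeList (edgeList.map q) := filter_eq_buildL q edgeList
  -- degree conditions in terms of cnt
  have hcnt : ∀ v : PV, cnt (edgeList.map (fun e => decide (v ∈ e))) (edgeList.map q) = 1 := by
    intro v
    have h1 : (F.filter (fun e => v ∈ e)).card = 1 := hdeg v
    rw [hF] at h1
    have hswap : Finset.filter (fun e => v ∈ e) (List.filter q edgeList).toFinset =
        ((List.filter q edgeList).filter (fun e => decide (v ∈ e))).toFinset := by
      ext x; simp [List.mem_filter]; tauto
    rw [hswap] at h1
    have hnd : (edgeList.filter q).Nodup := edgeList_nodup.filter q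
    have hnd2 : ((edgeList.filter q).filter (fun e => decide (v ∈ e))).Nodup := hnd.filter _
    rw [List.toFinset_card_of_nodup hnd2] at h1
    rw [← List.countP_eq_length_filter] at h1
    rw [hbuild, countP_buildL] at h1
    exact h1
  have hv01 := hcnt (pv2 0 1); have hv02 := hcnt (pv2 0 2); have hv03 := hcnt (pv2 0 3)
  have hv04 := hcnt (pv2 0 4); have hv12 := hcnt (pv2 1 2); have hv13 := hcnt (pv2 1 3)
  have hv14 := hcnt (pv2 1 4); have hv23 := hcnt (pv2 2 3); have hv24 := hcnt (pv2 2 4)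
  have hv34 := hcnt (pv2 3 4)
  -- rewrite the incidence masks to literals
  rw [show edgeList.map (fun e => decide ((pv2 0 1) ∈ e)) =
    [true, true, true, false, false, false, false, false, false, false, false, false, false, false, false] by decide] at hv01
  rw [show edgeList.map (fun e => decide ((pv2 0 2) ∈ e)) =
    [false, false, false, true, true, true, false, false, false, false, false, false, false, false, false] by decide] at hv02
  rw [show edgeList.map (fun e => decide ((pv2 0 3) ∈ e)) =
    [false, false, false, false, false, false, true, true, true, false, false, false, false, false, false] by decide] at hv03
  rw [show edgeList.map (fun e => decide ((pv2 0 4) ∈ e)) =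
    [false, false, false, false, false, false, false, false, false, true, true, true, false, false, false] by decide] at hv04
  rw [show edgeList.map (fun e => decide ((pv2 1 2) ∈ e)) =
    [false, false, false, false, false, false, true, false, false, true, false, false, true, false, false] by decide] at hv12
  rw [show edgeList.map (fun e => decide ((pv2 1 3) ∈ e)) =
    [false, false, false, true, false, false, false, false, false, false, true, false, false, true, false] by decide] at hv13
  rw [show edgeList.map (fun e => decide ((pv2 1 4) ∈ e)) =
    [false, false, false, false, true, false, false, true, false, false, false, false, false, false, true] by decide] at hv14
  rw [show edgeList.map (fun e => decide ((pv2 2 3) ∈ e)) =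
    [true, false, false, false, false, false, false, false, false, false, false, true, false, false, true] by decide] at hv23
  rw [show edgeList.map (fun e => decide ((pv2 2 4) ∈ e)) =
    [false, true, false, false, false, false, false, false, true, false, false, false, false, true, false] by decide] at hv24
  rw [show edgeList.map (fun e => decide ((pv2 3 4) ∈ e)) =
    [false, false, true, false, false, true, false, false, false, false, false, false, true, false, false] by decide] at hv34
  -- name the boolean choices
  have hmap : edgeList.map q =
      [q (pE 0 1 2 3), q (pE 0 1 2 4), q (pE 0 1 3 4), q (pE 0 2 1 3), q (pE 0 2 1 4),
       q (pE 0 2 3 4), q (pE 0 3 1 2), q (pE 0 3 1 4), q (pE 0 3 2 4), q (pE 0 4 1 2),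
       q (pE 0 4 1 3), q (pE 0 4 2 3), q (pE 1 2 3 4), q (pE 1 3 2 4), q (pE 1 4 2 3)] := rfl
  rw [hmap] at hv01 hv02 hv03 hv04 hv12 hv13 hv14 hv23 hv24 hv34
  have e01 : ex1 (q (pE 0 1 2 3)) (q (pE 0 1 2 4)) (q (pE 0 1 3 4)) := by
    simp [cnt, ex1] at hv01 ⊢; omega
  have e02 : ex1 (q (pE 0 2 1 3)) (q (pE 0 2 1 4)) (q (pE 0 2 3 4)) := by
    simp [cnt, ex1] at hv02 ⊢; omega
  have e03 : ex1 (q (pE 0 3 1 2)) (q (pE 0 3 1 4)) (q (pE 0 3 2 4)) := by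
    simp [cnt, ex1] at hv03 ⊢; omega
  have e04 : ex1 (q (pE 0 4 1 2)) (q (pE 0 4 1 3)) (q (pE 0 4 2 3)) := by
    simp [cnt, ex1] at hv04 ⊢; omega
  have e12 : ex1 (q (pE 0 3 1 2)) (q (pE 0 4 1 2)) (q (pE 1 2 3 4)) := by
    simp [cnt, ex1] at hv12 ⊢; omega
  have e13 : ex1 (q (pE 0 2 1 3)) (q (pE 0 4 1 3)) (q (pE 1 3 2 4)) := by
    simp [cnt, ex1] at hv13 ⊢; omega
  have e14 : ex1 (q (pE 0 2 1 4)) (q (pE 0 3 1 4)) (q (pE 1 4 2 3)) := by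
    simp [cnt, ex1] at hv14 ⊢; omega
  have e23 : ex1 (q (pE 0 1 2 3)) (q (pE 0 4 2 3)) (q (pE 1 4 2 3)) := by
    simp [cnt, ex1] at hv23 ⊢; omega
  have e24 : ex1 (q (pE 0 1 2 4)) (q (pE 0 3 2 4)) (q (pE 1 3 2 4)) := by
    simp [cnt, ex1] at hv24 ⊢; omega
  have e34 : ex1 (q (pE 0 1 3 4)) (q (pE 0 2 3 4)) (q (pE 1 2 3 4)) := by
    simp [cnt, ex1] at hv34 ⊢; omega
  have hmem : edgeList.map q ∈ sixMasks := by
    rw [hmap]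
    exact key_idx _ _ _ e01 _ _ _ e02 _ _ _ e03 _ _ _ e04 _ e12 e34 _ e13 e24 _ e14 e23
  rw [hF, hbuild]
  simp only [sixMasks, List.mem_cons, List.mem_singleton, List.not_mem_nil, or_false] at hmem
  rcases hmem with h|h|h|h|h|h <;> rw [h]
  · exact ⟨0, by decide⟩
  · exact ⟨1, by decide⟩
  · exact ⟨2, by decide⟩
  · exact ⟨3, by decide⟩
  · exact ⟨4, by decide⟩
  · exact ⟨5, by decide⟩

theorem msF_deg : ∀ (i : Fin 6) (v : PV), ((msF i).filter (fun e => v ∈ e)).card = 1 := by decide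

theorem msF_sub : ∀ i : Fin 6, msF i ⊆ petersen.edgeFinset := by decide

theorem pm_iff (M : Set (Sym2 PV)) :
    IsPerfectMatchingSet petersen M ↔ ∃ i : Fin 6, M = ↑(msF i) := by
  constructor
  · rintro ⟨hsub, hu⟩
    have hfin : M.Finite := Set.toFinite M
    set F := hfin.toFinset with hFdef
    have hcoe : ↑F = M := hfin.coe_toFinset
    have hsubF : F ⊆ petersen.edgeFinset := by
      intro e he
      rw [SimpleGraph.mem_edgeFinset]
      exact hsub (hfin.mem_toFinset.mp he)
    have hdeg : ∀ v : PV, (F.filter (fun e => v ∈ e)).card = 1 := by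
      intro v
      obtain ⟨e0, ⟨he0M, he0v⟩, huniq⟩ := hu v
      rw [Finset.card_eq_one]
      refine ⟨e0, ?_⟩
      ext x
      simp only [Finset.mem_filter, Finset.mem_singleton, hfin.mem_toFinset]
      constructor
      · rintro ⟨hxM, hxv⟩; exact huniq x ⟨hfin.mem_toFinset.mp hxM, hxv⟩
      · rintro rfl; exact ⟨hfin.mem_toFinset.mpr he0M, he0v⟩
    obtain ⟨i, hi⟩ := classify F hsubF hdeg
    exact ⟨i, by rw [← hcoe, hi]⟩
  · rintro ⟨i, rfl⟩
    constructor
    · intro e he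
      have : e ∈ petersen.edgeFinset := msF_sub i (by simpa using he)
      rwa [SimpleGraph.mem_edgeFinset] at this
    · intro v
      have h1 := msF_deg i v
      rw [Finset.card_eq_one] at h1
      obtain ⟨a, ha⟩ := h1
      have haf : a ∈ (msF i).filter (fun e => v ∈ e) := ha ▸ Finset.mem_singleton_self a
      rw [Finset.mem_filter] at haf
      refine ⟨a, ⟨by simpa using haf.1, haf.2⟩, ?_⟩
      rintro y ⟨hyM, hyv⟩
      have : y ∈ (msF i).filter (fun e => v ∈ e) :=
        Finset.mem_filter.mpr ⟨by simpa using hyM, hyv⟩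
      rw [ha, Finset.mem_singleton] at this
      exact this

set_option maxHeartbeats 2000000 in
theorem msF_union_le : ∀ i j k : Fin 6, (msF i ∪ msF j ∪ msF k).card ≤ 12 := by decide

theorem msF_union_eq : (msF 0 ∪ msF 1 ∪ msF 2).card = 12 := by decide

theorem stmt_12 :
    (∀ M₁ M₂ M₃ : Set (Sym2 {s : Finset (Fin 5) // s.card = 2}),
      IsPerfectMatchingSet petersen M₁ → IsPerfectMatchingSet petersen M₂ →
      IsPerfectMatchingSet petersen M₃ → (M₁ ∪ M₂ ∪ M₃).ncard ≤ 12) ∧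
    (∃ M₁ M₂ M₃ : Set (Sym2 {s : Finset (Fin 5) // s.card = 2}),
      IsPerfectMatchingSet petersen M₁ ∧ IsPerfectMatchingSet petersen M₂ ∧
      IsPerfectMatchingSet petersen M₃ ∧ (M₁ ∪ M₂ ∪ M₃).ncard = 12) := by
  constructor
  · intro M₁ M₂ M₃ h1 h2 h3
    obtain ⟨i, rfl⟩ := (pm_iff M₁).mp h1
    obtain ⟨j, rfl⟩ := (pm_iff M₂).mp h2
    obtain ⟨k, rfl⟩ := (pm_iff M₃).mp h3
    rw [← Finset.coe_union, ← Finset.coe_union, Set.ncard_coe_finset]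
    exact msF_union_le i j k
  · refine ⟨↑(msF 0), ↑(msF 1), ↑(msF 2), (pm_iff _).mpr ⟨0, rfl⟩, (pm_iff _).mpr ⟨1, rfl⟩,
      (pm_iff _).mpr ⟨2, rfl⟩, ?_⟩
    rw [← Finset.coe_union, ← Finset.coe_union, Set.ncard_coe_finset]
    exact msF_union_eq
end

section
/- The Petersen graph is not 3-edge-colorable: its edge set cannot be partitioned into three perfect matchings. -/
namespace PetersenAux

abbrev V := {s : Finset (Fin 5) // s.card = 2}

/-- outer 5-cycle vertices -/
def u : Fin 5 → V :=
  ![⟨{0,1}, by decide⟩, ⟨{2,3}, by decide⟩, ⟨{4,0}, by decide⟩,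
    ⟨{1,2}, by decide⟩, ⟨{3,4}, by decide⟩]

/-- inner 5-cycle (pentagram) vertices -/
def w : Fin 5 → V :=
  ![⟨{2,4}, by decide⟩, ⟨{4,1}, by decide⟩, ⟨{1,3}, by decide⟩,
    ⟨{3,0}, by decide⟩, ⟨{0,2}, by decide⟩]

def O (j : Fin 5) : Sym2 V := s(u j, u (j+1))
def I (j : Fin 5) : Sym2 V := s(w j, w (j+2))
def S (j : Fin 5) : Sym2 V := s(u j, w j)

lemma hOadj : ∀ j : Fin 5, petersen.Adj (u j) (u (j+1)) := by
  show ∀ j : Fin 5, Disjoint (u j).1 (u (j+1)).1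
  decide
lemma hIadj : ∀ j : Fin 5, petersen.Adj (w j) (w (j+2)) := by
  show ∀ j : Fin 5, Disjoint (w j).1 (w (j+2)).1
  decide
lemma hSadj : ∀ j : Fin 5, petersen.Adj (u j) (w j) := by
  show ∀ j : Fin 5, Disjoint (u j).1 (w j).1
  decide

lemma hOmem (j : Fin 5) : O j ∈ petersen.edgeSet := (petersen.mem_edgeSet).2 (hOadj j)
lemma hImem (j : Fin 5) : I j ∈ petersen.edgeSet := (petersen.mem_edgeSet).2 (hIadj j)
lemma hSmem (j : Fin 5) : S j ∈ petersen.edgeSet := (petersen.mem_edgeSet).2 (hSadj j)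

lemma neOO : ∀ j : Fin 5, O j ≠ O (j+1) := by decide
lemma neII : ∀ j : Fin 5, I j ≠ I (j+2) := by decide
lemma neSO : ∀ j k : Fin 5, S j ≠ O k := by decide
lemma neSI : ∀ j k : Fin 5, S j ≠ I k := by decide

set_option maxRecDepth 100000 in
set_option synthInstance.maxSize 2000 in
set_option synthInstance.maxHeartbeats 1000000 in
set_option maxHeartbeats 4000000 in
lemma key : ∀ o0 o1 o2 o3 o4 i0 i1 i2 i3 i4 : Fin 3,
    ¬((o0≠o1 ∧ o1≠o2 ∧ o2≠o3 ∧ o3≠o4 ∧ o4≠o0) ∧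
      (i0≠i2 ∧ i1≠i3 ∧ i2≠i4 ∧ i3≠i0 ∧ i4≠i1) ∧
      (∃ s : Fin 3, s ≠ o4 ∧ s ≠ o0 ∧ s ≠ i0 ∧ s ≠ i3) ∧
      (∃ s : Fin 3, s ≠ o0 ∧ s ≠ o1 ∧ s ≠ i1 ∧ s ≠ i4) ∧
      (∃ s : Fin 3, s ≠ o1 ∧ s ≠ o2 ∧ s ≠ i2 ∧ s ≠ i0) ∧
      (∃ s : Fin 3, s ≠ o2 ∧ s ≠ o3 ∧ s ≠ i3 ∧ s ≠ i1) ∧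
      (∃ s : Fin 3, s ≠ o3 ∧ s ≠ o4 ∧ s ≠ i4 ∧ s ≠ i2)) := by
  decide

end PetersenAux

open PetersenAux
theorem stmt_14 :
    ¬ ∃ M₁ M₂ M₃ : Set (Sym2 {s : Finset (Fin 5) // s.card = 2}),
      IsPerfectMatchingSet petersen M₁ ∧ IsPerfectMatchingSet petersen M₂ ∧
      IsPerfectMatchingSet petersen M₃ ∧
      Pairwise (Function.onFun Disjoint ![M₁, M₂, M₃]) ∧
      M₁ ∪ M₂ ∪ M₃ = petersen.edgeSet := by
  rintro ⟨M₁, M₂, M₃, h₁, h₂, h₃, _hdisj, hcover⟩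
  classical
  -- every edge is in some matching
  have hmem : ∀ e ∈ petersen.edgeSet, e ∈ M₁ ∨ e ∈ M₂ ∨ e ∈ M₃ := by
    intro e he
    rw [← hcover] at he
    simpa [Set.mem_union, or_assoc] using he
  -- the coloring
  set f : Sym2 V → Fin 3 :=
    fun e => if e ∈ M₁ then 0 else if e ∈ M₂ then 1 else 2 with hf_def
  -- properness: distinct edges sharing a vertex get distinct colors
  have P1 : ∀ e₁ e₂ : Sym2 V, e₁ ∈ petersen.edgeSet → e₂ ∈ petersen.edgeSet →
      e₁ ≠ e₂ → ∀ v : V, v ∈ e₁ → v ∈ e₂ → f e₁ ≠ f e₂ := by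
    intro e₁ e₂ he₁ he₂ hne v hv₁ hv₂ hf
    have same : ∃ M, IsPerfectMatchingSet petersen M ∧ e₁ ∈ M ∧ e₂ ∈ M := by
      by_cases a1 : e₁ ∈ M₁ <;> by_cases a2 : e₂ ∈ M₁
      · exact ⟨M₁, h₁, a1, a2⟩
      · exfalso
        by_cases b2 : e₂ ∈ M₂ <;> simp [hf_def, a1, a2, b2] at hf
      · exfalso
        by_cases b1 : e₁ ∈ M₂ <;> simp [hf_def, a1, a2, b1] at hf
      · by_cases b1 : e₁ ∈ M₂ <;> by_cases b2 : e₂ ∈ M₂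
        · exact ⟨M₂, h₂, b1, b2⟩
        · exfalso; simp [hf_def, a1, a2, b1, b2] at hf
        · exfalso; simp [hf_def, a1, a2, b1, b2] at hf
        · refine ⟨M₃, h₃, ?_, ?_⟩
          · exact ((hmem e₁ he₁).resolve_left a1).resolve_left b1
          · exact ((hmem e₂ he₂).resolve_left a2).resolve_left b2
    obtain ⟨M, hM, m1, m2⟩ := same
    obtain ⟨e, -, hu⟩ := hM.2 v
    exact hne ((hu e₁ ⟨m1, hv₁⟩).trans (hu e₂ ⟨m2, hv₂⟩).symm)
  -- instantiate the key combinatorial lemma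
  refine key (f (O 0)) (f (O 1)) (f (O 2)) (f (O 3)) (f (O 4))
    (f (I 0)) (f (I 1)) (f (I 2)) (f (I 3)) (f (I 4))
    ⟨⟨?_, ?_, ?_, ?_, ?_⟩, ⟨?_, ?_, ?_, ?_, ?_⟩, ?_, ?_, ?_, ?_, ?_⟩
  -- outer cycle constraints: O j and O (j+1) share vertex u (j+1)
  · exact P1 _ _ (hOmem 0) (hOmem 1) (neOO 0) (u 1) (Sym2.mem_mk_right _ _) (Sym2.mem_mk_left _ _)
  · exact P1 _ _ (hOmem 1) (hOmem 2) (neOO 1) (u 2) (Sym2.mem_mk_right _ _) (Sym2.mem_mk_left _ _)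
  · exact P1 _ _ (hOmem 2) (hOmem 3) (neOO 2) (u 3) (Sym2.mem_mk_right _ _) (Sym2.mem_mk_left _ _)
  · exact P1 _ _ (hOmem 3) (hOmem 4) (neOO 3) (u 4) (Sym2.mem_mk_right _ _) (Sym2.mem_mk_left _ _)
  · exact P1 _ _ (hOmem 4) (hOmem 0) (neOO 4) (u 0) (Sym2.mem_mk_right _ _) (Sym2.mem_mk_left _ _)
  -- inner cycle constraints: I j and I (j+2) share vertex w (j+2)
  · exact P1 _ _ (hImem 0) (hImem 2) (neII 0) (w 2) (Sym2.mem_mk_right _ _) (Sym2.mem_mk_left _ _)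
  · exact P1 _ _ (hImem 1) (hImem 3) (neII 1) (w 3) (Sym2.mem_mk_right _ _) (Sym2.mem_mk_left _ _)
  · exact P1 _ _ (hImem 2) (hImem 4) (neII 2) (w 4) (Sym2.mem_mk_right _ _) (Sym2.mem_mk_left _ _)
  · exact P1 _ _ (hImem 3) (hImem 0) (neII 3) (w 0) (Sym2.mem_mk_right _ _) (Sym2.mem_mk_left _ _)
  · exact P1 _ _ (hImem 4) (hImem 1) (neII 4) (w 1) (Sym2.mem_mk_right _ _) (Sym2.mem_mk_left _ _)
  -- spoke constraints: S j shares u j with O (j+4), O j and w j with I j, I (j+3)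
  · exact ⟨f (S 0),
      P1 _ _ (hSmem 0) (hOmem 4) (neSO 0 4) (u 0) (Sym2.mem_mk_left _ _) (Sym2.mem_mk_right _ _),
      P1 _ _ (hSmem 0) (hOmem 0) (neSO 0 0) (u 0) (Sym2.mem_mk_left _ _) (Sym2.mem_mk_left _ _),
      P1 _ _ (hSmem 0) (hImem 0) (neSI 0 0) (w 0) (Sym2.mem_mk_right _ _) (Sym2.mem_mk_left _ _),
      P1 _ _ (hSmem 0) (hImem 3) (neSI 0 3) (w 0) (Sym2.mem_mk_right _ _) (Sym2.mem_mk_right _ _)⟩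
  · exact ⟨f (S 1),
      P1 _ _ (hSmem 1) (hOmem 0) (neSO 1 0) (u 1) (Sym2.mem_mk_left _ _) (Sym2.mem_mk_right _ _),
      P1 _ _ (hSmem 1) (hOmem 1) (neSO 1 1) (u 1) (Sym2.mem_mk_left _ _) (Sym2.mem_mk_left _ _),
      P1 _ _ (hSmem 1) (hImem 1) (neSI 1 1) (w 1) (Sym2.mem_mk_right _ _) (Sym2.mem_mk_left _ _),
      P1 _ _ (hSmem 1) (hImem 4) (neSI 1 4) (w 1) (Sym2.mem_mk_right _ _) (Sym2.mem_mk_right _ _)⟩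
  · exact ⟨f (S 2),
      P1 _ _ (hSmem 2) (hOmem 1) (neSO 2 1) (u 2) (Sym2.mem_mk_left _ _) (Sym2.mem_mk_right _ _),
      P1 _ _ (hSmem 2) (hOmem 2) (neSO 2 2) (u 2) (Sym2.mem_mk_left _ _) (Sym2.mem_mk_left _ _),
      P1 _ _ (hSmem 2) (hImem 2) (neSI 2 2) (w 2) (Sym2.mem_mk_right _ _) (Sym2.mem_mk_left _ _),
      P1 _ _ (hSmem 2) (hImem 0) (neSI 2 0) (w 2) (Sym2.mem_mk_right _ _) (Sym2.mem_mk_right _ _)⟩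
  · exact ⟨f (S 3),
      P1 _ _ (hSmem 3) (hOmem 2) (neSO 3 2) (u 3) (Sym2.mem_mk_left _ _) (Sym2.mem_mk_right _ _),
      P1 _ _ (hSmem 3) (hOmem 3) (neSO 3 3) (u 3) (Sym2.mem_mk_left _ _) (Sym2.mem_mk_left _ _),
      P1 _ _ (hSmem 3) (hImem 3) (neSI 3 3) (w 3) (Sym2.mem_mk_right _ _) (Sym2.mem_mk_left _ _),
      P1 _ _ (hSmem 3) (hImem 1) (neSI 3 1) (w 3) (Sym2.mem_mk_right _ _) (Sym2.mem_mk_right _ _)⟩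
  · exact ⟨f (S 4),
      P1 _ _ (hSmem 4) (hOmem 3) (neSO 4 3) (u 4) (Sym2.mem_mk_left _ _) (Sym2.mem_mk_right _ _),
      P1 _ _ (hSmem 4) (hOmem 4) (neSO 4 4) (u 4) (Sym2.mem_mk_left _ _) (Sym2.mem_mk_left _ _),
      P1 _ _ (hSmem 4) (hImem 4) (neSI 4 4) (w 4) (Sym2.mem_mk_right _ _) (Sym2.mem_mk_left _ _),
      P1 _ _ (hSmem 4) (hImem 2) (neSI 4 2) (w 4) (Sym2.mem_mk_right _ _) (Sym2.mem_mk_right _ _)⟩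
end
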